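/- Let (G, k, (V^i)_{i=1}^k) be a Multicolored Clique instance with |V^i| = n for every i and n, k ≥ 2, and let H be the graph produced by the reduction. Then the treedepth of H satisfies td(H) ≤ C(k,2) + k + 3, where C(k,2) = k(k−1)/2; in particular td(H) = O(k^2). -/

import Mathlib

open SimpleGraph Finset
open scoped Classical

namespace Paper

noncomputable section

variable {V : Type} [Fintype V] [DecidableEq V] {τ : Type} [Fintype τ]

/-! ### Multicommodity flows as weighted path systems -/

/-- Total amount of flow sent on paths from `u` to `v`. -/
def pairFlow {G : SimpleGraph V} (f : ∀ u v : V, G.Path u v → ℝ) (u v : V) : ℝ :=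
  ∑ p : G.Path u v, f u v p

/-- Total amount of flow on paths using the edge `e`. -/
def edgeLoad {G : SimpleGraph V} (f : ∀ u v : V, G.Path u v → ℝ) (e : Sym2 V) : ℝ :=
  ∑ u, ∑ v, ∑ p : G.Path u v, if e ∈ (p : G.Walk u v).edges then f u v p else 0

/-- Total amount of flow on paths using the vertex `w`. -/
def vertLoad {G : SimpleGraph V} (f : ∀ u v : V, G.Path u v → ℝ) (w : V) : ℝ :=
  ∑ u, ∑ v, ∑ p : G.Path u v, if w ∈ (p : G.Walk u v).support then f u v p else 0

/-- The marginal of `z`: the total amount of flow routed for `z`,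
i.e. on paths having `z` as an endpoint. -/
def margOf {G : SimpleGraph V} (f : ∀ u v : V, G.Path u v → ℝ) (z : V) : ℝ :=
  (∑ v, pairFlow f z v) + ∑ u, pairFlow f u z

/-- The total value `|f|` of a multicommodity flow for the pairs `M`. -/
def valueOf {G : SimpleGraph V} (f : ∀ u v : V, G.Path u v → ℝ) (M : Finset (V × V)) : ℝ :=
  ∑ m ∈ M, pairFlow f m.1 m.2

/-- The pairs `M` form a matching on the terminals: all the endpoints are distinct. -/
def PairsMatching (M : Finset (V × V)) : Prop :=
  (∀ m ∈ M, m.1 ≠ m.2) ∧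
    ∀ m ∈ M, ∀ m' ∈ M, m ≠ m' →
      m.1 ≠ m'.1 ∧ m.1 ≠ m'.2 ∧ m.2 ≠ m'.1 ∧ m.2 ≠ m'.2

/-- `v` is a terminal of the collection of pairs `M`. -/
def Terminal (M : Finset (V × V)) (v : V) : Prop :=
  ∃ m ∈ M, m.1 = v ∨ m.2 = v

/-- A feasible fractional solution `(f, x)` to the multicommodity flow relaxation
`EDP-LP` of MaxEDP (edge capacities): nonnegative flow between the pairs of `M` only,
routing `x_i ≤ 1` for each pair, satisfying the edge capacities.  The marginals `x`
are recovered as `pairFlow f` and `margOf f`. -/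
structure EDPFlow (G : SimpleGraph V) (cap : Sym2 V → ℕ) (M : Finset (V × V)) where
  f : ∀ u v : V, G.Path u v → ℝ
  nonneg : ∀ u v p, 0 ≤ f u v p
  supp : ∀ u v, (u, v) ∉ M → ∀ p, f u v p = 0
  le_one : ∀ m ∈ M, pairFlow f m.1 m.2 ≤ 1
  feas : ∀ e : Sym2 V, edgeLoad f e ≤ (cap e : ℝ)

def EDPFlow.value {G : SimpleGraph V} {cap : Sym2 V → ℕ} {M : Finset (V × V)}
    (F : EDPFlow G cap M) : ℝ := valueOf F.f M

def EDPFlow.marg {G : SimpleGraph V} {cap : Sym2 V → ℕ} {M : Finset (V × V)}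
    (F : EDPFlow G cap M) (z : V) : ℝ := margOf F.f z

/-- A feasible fractional solution to the multicommodity flow relaxation of
MaxNDP (node capacities). -/
structure NDPFlow (G : SimpleGraph V) (cap : V → ℕ) (M : Finset (V × V)) where
  f : ∀ u v : V, G.Path u v → ℝ
  nonneg : ∀ u v p, 0 ≤ f u v p
  supp : ∀ u v, (u, v) ∉ M → ∀ p, f u v p = 0
  le_one : ∀ m ∈ M, pairFlow f m.1 m.2 ≤ 1
  feas : ∀ w : V, vertLoad f w ≤ (cap w : ℝ)

def NDPFlow.value {G : SimpleGraph V} {cap : V → ℕ} {M : Finset (V × V)}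
    (F : NDPFlow G cap M) : ℝ := valueOf F.f M

def NDPFlow.marg {G : SimpleGraph V} {cap : V → ℕ} {M : Finset (V × V)}
    (F : NDPFlow G cap M) (z : V) : ℝ := margOf F.f z

/-- There is a feasible integral routing (with congestion `con`) of at least `q`
of the pairs of `M`, subject to edge capacities: a subset `R ⊆ M` of size at least `q`
together with a choice of a path for each pair of `R` such that every edge `e`
is on at most `con * cap e` of the chosen paths. -/
def HasEDPRouting (G : SimpleGraph V) (cap : Sym2 V → ℕ) (M : Finset (V × V))
    (con : ℕ) (q : ℝ) : Prop :=
  ∃ (R : Finset (V × V)) (route : ∀ m ∈ R, G.Path m.1 m.2),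
    R ⊆ M ∧ q ≤ (R.card : ℝ) ∧
      ∀ e : Sym2 V,
        (R.attach.filter fun m => e ∈ (route m.1 m.2).val.edges).card ≤ con * cap e

/-- There is a feasible integral routing (with congestion `con`) of at least `q`
of the pairs of `M`, subject to node capacities. -/
def HasNDPRouting (G : SimpleGraph V) (cap : V → ℕ) (M : Finset (V × V))
    (con : ℕ) (q : ℝ) : Prop :=
  ∃ (R : Finset (V × V)) (route : ∀ m ∈ R, G.Path m.1 m.2),
    R ⊆ M ∧ q ≤ (R.card : ℝ) ∧
      ∀ w : V,
        (R.attach.filter fun m => w ∈ (route m.1 m.2).val.support).card ≤ con * cap w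

/-! ### Induced subgraphs on vertex subsets -/

/-- The subgraph of `G` induced on `U` (as a graph on the same vertex set, with all
vertices outside `U` isolated). -/
def restrictG (G : SimpleGraph V) (U : Set V) : SimpleGraph V where
  Adj u v := u ∈ U ∧ v ∈ U ∧ G.Adj u v
  symm := ⟨fun u v h => ⟨h.2.1, h.1, h.2.2.symm⟩⟩
  loopless := ⟨fun v h => G.loopless.irrefl v h.2.2⟩

lemma restrictG_le (G : SimpleGraph V) (U : Set V) : restrictG G U ≤ G :=
  fun _ _ h => h.2.2

/-- Push a path along a subgraph inclusion. -/
def pathMapLe {G G' : SimpleGraph V} (h : G ≤ G') {u v : V} (p : G.Path u v) :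
    G'.Path u v :=
  ⟨(p : G.Walk u v).mapLe h, (SimpleGraph.Walk.mapLe_isPath h).mpr p.prop⟩

/-- The vertex set `s` is (nonempty and) connected in `G`. -/
def ConnOn (G : SimpleGraph V) (s : Finset V) : Prop :=
  s.Nonempty ∧ ∀ u ∈ s, ∀ v ∈ s, (restrictG G ↑s).Reachable u v

/-! ### Rooted tree decompositions -/

/-- The parent adhesion `σ(t) = β(t) ∩ β(parent t)` (empty at the root). -/
def sigmaOf (parent : τ → τ) (root : τ) (bag : τ → Finset V) (t : τ) : Finset V :=
  if t = root then ∅ else bag t ∩ bag (parent t)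

/-- `γ(t)`: the union of the bags at the descendants of `t`. -/
def gammaOf (parent : τ → τ) (bag : τ → Finset V) (t : τ) : Finset V :=
  Finset.univ.filter fun v => ∃ s, (∃ n, parent^[n] s = t) ∧ v ∈ bag s

/-- A rooted tree decomposition of `G`, encoded by the parent map of the rooted
tree on the node set `τ`.  The last two axioms state that for every vertex `v` the
set of nodes whose bag contains `v` is connected in the tree (it is closed under
taking intermediate ancestors, and any two such nodes have a common ancestor
whose bag still contains `v`). -/
structure TreeDecomp (τ : Type) [Fintype τ] {V : Type} [Fintype V] [DecidableEq V]
    (G : SimpleGraph V) where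
  root : τ
  parent : τ → τ
  parent_root : parent root = root
  reach_root : ∀ t : τ, ∃ n : ℕ, parent^[n] t = root
  bag : τ → Finset V
  edge_in_bag : ∀ u v : V, G.Adj u v → ∃ t, u ∈ bag t ∧ v ∈ bag t
  vert_in_bag : ∀ v : V, ∃ t, v ∈ bag t
  interval : ∀ (v : V) (t : τ) (m n : ℕ), m ≤ n → v ∈ bag t → v ∈ bag (parent^[n] t) →
    v ∈ bag (parent^[m] t)
  meet : ∀ (v : V) (t s : τ), v ∈ bag t → v ∈ bag s →
    ∃ m n : ℕ, parent^[m] t = parent^[n] s ∧ v ∈ bag (parent^[m] t)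

variable {G : SimpleGraph V}

/-- The tree of the decomposition is a path rooted at one of its endpoints:
every node has at most one child. -/
def TreeDecomp.IsPathDecomp (D : TreeDecomp τ G) : Prop :=
  ∀ t s : τ, D.parent t = D.parent s → t ≠ D.parent t → s ≠ D.parent s → t = s

def TreeDecomp.sigma (D : TreeDecomp τ G) (t : τ) : Finset V :=
  sigmaOf D.parent D.root D.bag t

def TreeDecomp.gamma (D : TreeDecomp τ G) (t : τ) : Finset V :=
  gammaOf D.parent D.bag t

def TreeDecomp.alpha (D : TreeDecomp τ G) (t : τ) : Finset V :=
  D.gamma t \ D.sigma t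

/-- The graph `G(t) = G[γ(t)] − E(G[σ(t)])`. -/
def TreeDecomp.Gt (D : TreeDecomp τ G) (t : τ) : SimpleGraph V where
  Adj u v := G.Adj u v ∧ u ∈ D.gamma t ∧ v ∈ D.gamma t ∧ ¬(u ∈ D.sigma t ∧ v ∈ D.sigma t)
  symm := ⟨fun u v h => ⟨h.1.symm, h.2.2.1, h.2.1, fun hc => h.2.2.2 ⟨hc.2, hc.1⟩⟩⟩
  loopless := ⟨fun v h => G.loopless.irrefl v h.1⟩

/-! ### Flows to a set of vertices -/

/-- A feasible (edge-capacitated) flow in `H` whose flow paths all end in `S`. -/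
structure EFlowToSet (H : SimpleGraph V) (cap : Sym2 V → ℕ) (S : Finset V) where
  g : ∀ u v : V, H.Path u v → ℝ
  nonneg : ∀ u v p, 0 ≤ g u v p
  ends : ∀ u v p, g u v p ≠ 0 → v ∈ S
  feas : ∀ e : Sym2 V, edgeLoad g e ≤ (cap e : ℝ)

/-- The amount of flow routed from `z` (to the target set). -/
def EFlowToSet.fromAmt {H : SimpleGraph V} {cap : Sym2 V → ℕ} {S : Finset V}
    (F : EFlowToSet H cap S) (z : V) : ℝ :=
  ∑ v, pairFlow F.g z v

/-- A feasible (node-capacitated) flow in `H` whose flow paths all end in `S`. -/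
structure NFlowToSet (H : SimpleGraph V) (cap : V → ℕ) (S : Finset V) where
  g : ∀ u v : V, H.Path u v → ℝ
  nonneg : ∀ u v p, 0 ≤ g u v p
  ends : ∀ u v p, g u v p ≠ 0 → v ∈ S
  feas : ∀ w : V, vertLoad g w ≤ (cap w : ℝ)

def NFlowToSet.fromAmt {H : SimpleGraph V} {cap : V → ℕ} {S : Finset V}
    (F : NFlowToSet H cap S) (z : V) : ℝ :=
  ∑ v, pairFlow F.g z v

/-! ### Safe and good nodes -/

/-- A node `t` is safe w.r.t. an (edge-capacitated) fractional solution `F` if some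
feasible flow in `G(t)` routes at least `x(z)/(4r)` from every `z ∈ γ(t)` to `σ(t)`. -/
def ESafe {M : Finset (V × V)} (cap : Sym2 V → ℕ) (D : TreeDecomp τ G) (r : ℕ)
    (F : EDPFlow G cap M) (t : τ) : Prop :=
  ∃ gf : EFlowToSet (D.Gt t) cap (D.sigma t),
    ∀ z ∈ D.gamma t, F.marg z / (4 * (r : ℝ)) ≤ gf.fromAmt z

/-- A node `t` is safe w.r.t. a node-capacitated fractional solution `F`. -/
def NSafe {M : Finset (V × V)} (cap : V → ℕ) (D : TreeDecomp τ G) (r : ℕ)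
    (F : NDPFlow G cap M) (t : τ) : Prop :=
  ∃ gf : NFlowToSet (D.Gt t) cap (D.sigma t),
    ∀ z ∈ D.gamma t, F.marg z / (4 * (r : ℝ)) ≤ gf.fromAmt z

/-- `t` is good w.r.t. a flow `f` (for the decomposition data `parent`, `root`, `bag`):
every flow path in the support of `f` with an endpoint in `γ(t)` intersects `σ(t)`. -/
def GoodWrt {G : SimpleGraph V} (f : ∀ u v : V, G.Path u v → ℝ)
    (parent : τ → τ) (root : τ) (bag : τ → Finset V) (t : τ) : Prop :=
  ∀ (u v : V) (p : G.Path u v), f u v p ≠ 0 →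
    (u ∈ gammaOf parent bag t ∨ v ∈ gammaOf parent bag t) →
    ∃ w ∈ sigmaOf parent root bag t, w ∈ (p : G.Walk u v).support

def EGood {M : Finset (V × V)} {cap : Sym2 V → ℕ} (D : TreeDecomp τ G)
    (F : EDPFlow G cap M) (t : τ) : Prop :=
  GoodWrt F.f D.parent D.root D.bag t

def NGood {M : Finset (V × V)} {cap : V → ℕ} (D : TreeDecomp τ G)
    (F : NDPFlow G cap M) (t : τ) : Prop :=
  GoodWrt F.f D.parent D.root D.bag t

/-- The total capacity of the edge cut `δ(U)`. -/
def cutCap (G : SimpleGraph V) (cap : Sym2 V → ℕ) (U : Finset V) : ℝ :=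
  ∑ u ∈ U, ∑ v ∈ Uᶜ, if G.Adj u v then (cap s(u, v) : ℝ) else 0

/-! ### Multicommodity flows with demands, well-linkedness -/

/-- A feasible edge-capacitated multicommodity flow routing at least `dem u v`
between every pair `(u, v)`. -/
structure EMCFlow (H : SimpleGraph V) (cap : Sym2 V → ℕ) (dem : V → V → ℝ) where
  g : ∀ u v : V, H.Path u v → ℝ
  nonneg : ∀ u v p, 0 ≤ g u v p
  routes : ∀ u v : V, dem u v ≤ pairFlow g u v
  feas : ∀ e : Sym2 V, edgeLoad g e ≤ (cap e : ℝ)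

/-- A feasible node-capacitated multicommodity flow routing at least `dem u v`
between every pair `(u, v)`. -/
structure NMCFlow (H : SimpleGraph V) (cap : V → ℕ) (dem : V → V → ℝ) where
  g : ∀ u v : V, H.Path u v → ℝ
  nonneg : ∀ u v p, 0 ≤ g u v p
  routes : ∀ u v : V, dem u v ≤ pairFlow g u v
  feas : ∀ w : V, vertLoad g w ≤ (cap w : ℝ)

/-- `X` is `π`-flow-well-linked in the edge-capacitated graph `H`. -/
def FlowWellLinked (H : SimpleGraph V) (cap : Sym2 V → ℕ) (X : Finset V)
    (π : V → ℝ) : Prop :=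
  Nonempty (EMCFlow H cap fun u v =>
    if u ∈ X ∧ v ∈ X then π u * π v / (∑ w ∈ X, π w) else 0)

/-- The pairs of `M` with both endpoints in `s`. -/
def inducedPairs (M : Finset (V × V)) (s : Finset V) : Finset (V × V) :=
  M.filter fun m => m.1 ∈ s ∧ m.2 ∈ s

/-- The set of endpoints of the pairs of `M`. -/
def endpointsOf (M : Finset (V × V)) : Finset V :=
  M.image Prod.fst ∪ M.image Prod.snd

/-! ### Minors, graph classes, torsos -/

/-- `H` is a minor of `G`, via disjoint connected branch sets. -/
def IsMinorOf {W : Type} (H : SimpleGraph W) (G : SimpleGraph V) : Prop :=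
  ∃ φ : W → Finset V,
    (∀ w, ConnOn G (φ w)) ∧
    (∀ w w', w ≠ w' → Disjoint (φ w) (φ w')) ∧
    (∀ w w', H.Adj w w' → ∃ a ∈ φ w, ∃ b ∈ φ w', G.Adj a b)

/-- A class of (finite) graphs, given by its members on the canonical vertex sets. -/
def MinorClosed (𝒢 : ∀ n : ℕ, SimpleGraph (Fin n) → Prop) : Prop :=
  ∀ {n m : ℕ} (G : SimpleGraph (Fin n)) (H : SimpleGraph (Fin m)),
    𝒢 n G → IsMinorOf H G → 𝒢 m H

/-- A finite graph belongs to the class `𝒢` (up to isomorphism). -/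
def InClass (𝒢 : ∀ n : ℕ, SimpleGraph (Fin n) → Prop) {W : Type}
    (H : SimpleGraph W) : Prop :=
  ∃ (n : ℕ) (H' : SimpleGraph (Fin n)), 𝒢 n H' ∧ Nonempty (H ≃g H')

/-- The torso at `t`: the subgraph induced on `β(t)`, with all adhesions of tree edges
incident to `t` turned into cliques (as a graph on `V`; restrict to the bag to get
the usual torso). -/
def TreeDecomp.torso (D : TreeDecomp τ G) (t : τ) : SimpleGraph V :=
  SimpleGraph.fromRel fun u v =>
    u ∈ D.bag t ∧ v ∈ D.bag t ∧
      (G.Adj u v ∨ (u ∈ D.sigma t ∧ v ∈ D.sigma t) ∨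
        ∃ s : τ, s ≠ D.root ∧ D.parent s = t ∧ u ∈ D.sigma s ∧ v ∈ D.sigma s)

/-! ### Treedepth -/

/-- The connected component of `v` in `G` restricted to `s`. -/
def compOf (G : SimpleGraph V) (s : Finset V) (v : V) : Finset V :=
  s.filter fun u => (restrictG G ↑s).Reachable v u

/-- Treedepth of `G[s]`, computed with fuel (the recursion terminates before the
fuel runs out, since both deleting a vertex and passing to a connected component of
a disconnected graph strictly decrease the number of vertices). -/
def tdAux (G : SimpleGraph V) : ℕ → Finset V → ℕ
  | 0, _ => 0
  | fuel + 1, s =>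
    if hs : s.Nonempty then
      if ConnOn G s then
        1 + s.inf' hs fun v => tdAux G fuel (s.erase v)
      else
        s.sup fun v => tdAux G fuel (compOf G s v)
    else 0

/-- The treedepth of the subgraph of `G` induced on `s`:  `td(∅) = 0`;
`td(G) = 1 + min_v td(G − v)` for a connected nonempty `G`; and `td(G)` is the maximum
of the treedepths of the connected components for a disconnected `G`. -/
def treedepth (G : SimpleGraph V) (s : Finset V) : ℕ :=
  tdAux G s.card s

end




/-- The vertex set of the graph `H` produced by the reduction (with `k = K + 2`,
`n = N + 2`): the path vertices `x^i_{v,j}`, the terminals `s^i_v`, `t^i_v`, and the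
connector vertices `p_{i,j}`.  (Vertices `x^i_{v,i}`, `s^i_{u^i}`, `t^i_{u^i}` and
`p_{i,j}` for `i ≥ j` are unused, isolated dummies; the distinguished vertex `u^i`
is chosen to be `0`.) -/
inductive HV (K N : ℕ) where
  | x : Fin (K + 2) → Fin (N + 2) → Fin (K + 2) → HV K N
  | s : Fin (K + 2) → Fin (N + 2) → HV K N
  | t : Fin (K + 2) → Fin (N + 2) → HV K N
  | p : Fin (K + 2) → Fin (K + 2) → HV K N
  deriving DecidableEq, Fintype

/-- The index of the first vertex of the path `X^i_v` (the first element of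
`{0, …, k−1} \ {i}`). -/
def firstIdx (K : ℕ) (i : Fin (K + 2)) : Fin (K + 2) := if i = 0 then 1 else 0

/-- The index of the last vertex of the path `X^i_v`. -/
def lastIdx (K : ℕ) (i : Fin (K + 2)) : Fin (K + 2) :=
  if i = Fin.last (K + 1) then ⟨K, by omega⟩ else Fin.last (K + 1)

/-- The adjacencies of the reduction graph `H`:  `s^i_v` is adjacent to the first
vertices of `X^i_v` and `X^i_{u^i}`;  `t^i_v` to their last vertices;  `p_{i,j}`
(for `i < j`) to all `x^i_{v,j}` and all `x^j_{u,i}`;  and consecutive vertices of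
each path `X^i_v` (the indices `0, …, k−1` skipping `i`) are adjacent. -/
def hrel (K N : ℕ) : HV K N → HV K N → Prop
  | HV.s i v, HV.x i' w j => i' = i ∧ v ≠ 0 ∧ (w = v ∨ w = 0) ∧ j = firstIdx K i
  | HV.t i v, HV.x i' w j => i' = i ∧ v ≠ 0 ∧ (w = v ∨ w = 0) ∧ j = lastIdx K i
  | HV.p i j, HV.x i' _w j' => i < j ∧ ((i' = i ∧ j' = j) ∨ (i' = j ∧ j' = i))
  | HV.x i v j, HV.x i' v' j' => i' = i ∧ v' = v ∧ i ≠ j ∧ i ≠ j' ∧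
      ((j' : ℕ) = (j : ℕ) + 1 ∨ ((j' : ℕ) = (j : ℕ) + 2 ∧ (i : ℕ) = (j : ℕ) + 1))
  | _, _ => False

/-- The graph `H` produced by the reduction. -/
def hgraph (K N : ℕ) : SimpleGraph (HV K N) := SimpleGraph.fromRel (hrel K N)

open scoped Classical in
/-- The terminal pairs `M = M_st ∪ M_x` of the reduction:  `(s^i_v, t^i_v)` for every
`i` and `v ≠ u^i = 0`, and `(x^i_{v,j}, x^j_{u,i})` for every edge `vu` of `G` with
`v ∈ V^i`, `u ∈ V^j`, `i < j`. -/
noncomputable def Mpairs (K N : ℕ) (G : SimpleGraph (Fin (K + 2) × Fin (N + 2))) :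
    Finset (HV K N × HV K N) :=
  Finset.univ.filter fun m : HV K N × HV K N =>
    (∃ (i : Fin (K + 2)) (v : Fin (N + 2)), v ≠ 0 ∧ m.1 = HV.s i v ∧ m.2 = HV.t i v) ∨
    (∃ (i j : Fin (K + 2)) (v u : Fin (N + 2)), i < j ∧ G.Adj (i, v) (j, u) ∧
      m.1 = HV.x i v j ∧ m.2 = HV.x j u i)

/-- The required number of routed pairs, `ℓ = k(n−1) + k(k−1)/2`. -/
def ellKN (K N : ℕ) : ℕ := (K + 2) * (N + 1) + (K + 2) * (K + 1) / 2

/-- `G` (on vertex set `V = V^1 ⊎ ⋯ ⊎ V^k`, `V^i = {i} × Fin n`) has a multicolored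
clique: a `k`-clique with exactly one vertex in each `V^i`. -/
def HasMulticoloredClique (K N : ℕ) (G : SimpleGraph (Fin (K + 2) × Fin (N + 2))) : Prop :=
  ∃ f : Fin (K + 2) → Fin (N + 2), ∀ i j, i ≠ j → G.Adj (i, f i) (j, f j)


section TDInfra

variable {V : Type} [Fintype V] [DecidableEq V]

lemma tdAux_empty (G : SimpleGraph V) (f : ℕ) : tdAux G f (∅ : Finset V) = 0 := by
  cases f <;> simp [tdAux]

lemma mem_compOf {G : SimpleGraph V} {s : Finset V} {v u : V} :
    u ∈ compOf G s v ↔ u ∈ s ∧ (restrictG G ↑s).Reachable v u := by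
  simp [compOf]

lemma compOf_ssubset {G : SimpleGraph V} {s : Finset V} (hs : s.Nonempty)
    (hc : ¬ ConnOn G s) {v : V} (hv : v ∈ s) : compOf G s v ⊂ s := by
  rw [ConnOn] at hc
  push_neg at hc
  obtain ⟨u, hu, w, hw, hr⟩ := hc hs
  unfold compOf
  rw [Finset.ssubset_iff_of_subset (Finset.filter_subset _ _)]
  by_cases h : (restrictG G ↑s).Reachable v u
  · refine ⟨w, hw, fun hmem => ?_⟩
    exact hr (h.symm.trans (mem_compOf.mp hmem).2)
  · exact ⟨u, hu, fun hmem => h (mem_compOf.mp hmem).2⟩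

lemma tdAux_fuel (G : SimpleGraph V) :
    ∀ f g : ℕ, ∀ s : Finset V, s.card ≤ f → s.card ≤ g → tdAux G f s = tdAux G g s := by
  intro f
  induction f with
  | zero =>
    intro g s h1 _
    obtain rfl : s = ∅ := Finset.card_eq_zero.mp (Nat.le_zero.mp h1)
    simp [tdAux_empty]
  | succ f ih =>
    intro g s h1 h2
    rcases s.eq_empty_or_nonempty with rfl | hs
    · simp [tdAux_empty]
    · have hpos := hs.card_pos
      obtain ⟨g, rfl⟩ : ∃ g', g = g' + 1 := ⟨g - 1, by omega⟩
      simp only [tdAux, dif_pos hs]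
      by_cases hc : ConnOn G s
      · rw [if_pos hc, if_pos hc]
        congr 1
        apply Finset.inf'_congr hs rfl
        intro v hv
        have hce := Finset.card_erase_of_mem hv
        exact ih g (s.erase v) (by omega) (by omega)
      · rw [if_neg hc, if_neg hc]
        apply Finset.sup_congr rfl
        intro v hv
        have hclt := Finset.card_lt_card (compOf_ssubset hs hc hv)
        exact ih g _ (by omega) (by omega)

lemma tdAux_le_card (G : SimpleGraph V) : ∀ f : ℕ, ∀ s : Finset V, tdAux G f s ≤ s.card := by
  intro f
  induction f with
  | zero => intro s; simp [tdAux]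
  | succ f ih =>
    intro s
    by_cases hs : s.Nonempty
    · simp only [tdAux, dif_pos hs]
      by_cases hc : ConnOn G s
      · rw [if_pos hc]
        obtain ⟨v, hv⟩ := hs
        have h1 : s.inf' ⟨v, hv⟩ (fun v => tdAux G f (s.erase v)) ≤ tdAux G f (s.erase v) :=
          Finset.inf'_le _ hv
        have h2 := ih (s.erase v)
        rw [Finset.card_erase_of_mem hv] at h2
        have hpos : 0 < s.card := Finset.card_pos.mpr ⟨v, hv⟩
        omega
      · rw [if_neg hc]
        apply Finset.sup_le
        intro v _
        exact le_trans (ih _) (Finset.card_le_card (Finset.filter_subset _ _))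
    · simp only [tdAux, dif_neg hs]
      omega

lemma treedepth_le_card (G : SimpleGraph V) (s : Finset V) : treedepth G s ≤ s.card :=
  tdAux_le_card G s.card s

lemma tdAux_le_of_conn (G : SimpleGraph V) (A : Finset V) (c : ℕ) :
    ∀ f : ℕ, ∀ s : Finset V, s.card ≤ f →
      (∀ t ⊆ s \ A, ConnOn G t → tdAux G t.card t ≤ c) →
      tdAux G f s ≤ (s ∩ A).card + c := by
  intro f
  induction f with
  | zero =>
    intro s h1 _
    obtain rfl : s = ∅ := Finset.card_eq_zero.mp (Nat.le_zero.mp h1)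
    simp [tdAux_empty]
  | succ f ih =>
    intro s hcard hH
    rcases s.eq_empty_or_nonempty with rfl | hs
    · simp [tdAux_empty]
    by_cases hc : ConnOn G s
    · rcases (s ∩ A).eq_empty_or_nonempty with hA | ⟨a, ha⟩
      · have hsub : s ⊆ s \ A := by
          intro u hu
          rw [Finset.mem_sdiff]
          refine ⟨hu, fun hA' => ?_⟩
          have : u ∈ s ∩ A := Finset.mem_inter.mpr ⟨hu, hA'⟩
          simp [hA] at this
        calc tdAux G (f + 1) s = tdAux G s.card s := tdAux_fuel G (f + 1) s.card s hcard le_rfl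
          _ ≤ c := hH s hsub hc
          _ ≤ (s ∩ A).card + c := Nat.le_add_left _ _
      · have has : a ∈ s := Finset.mem_of_mem_inter_left ha
        simp only [tdAux, dif_pos hs, if_pos hc]
        have h1 : s.inf' hs (fun v => tdAux G f (s.erase v)) ≤ tdAux G f (s.erase a) :=
          Finset.inf'_le _ has
        have hce := Finset.card_erase_of_mem has
        have h2 := ih (s.erase a) (by omega)
          (fun t ht hct => hH t (ht.trans (Finset.sdiff_subset_sdiff (Finset.erase_subset _ _) le_rfl)) hct)
        have h3 : (s.erase a) ∩ A = (s ∩ A).erase a := by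
          ext u
          simp only [Finset.mem_inter, Finset.mem_erase]
          tauto
        rw [h3, Finset.card_erase_of_mem ha] at h2
        have hposA : 1 ≤ (s ∩ A).card := Finset.card_pos.mpr ⟨a, ha⟩
        omega
    · simp only [tdAux, dif_pos hs, if_neg hc]
      apply Finset.sup_le
      intro v hv
      have hss := compOf_ssubset hs hc hv
      have hclt := Finset.card_lt_card hss
      have h2 := ih (compOf G s v) (by omega)
        (fun t ht hct => hH t (ht.trans (Finset.sdiff_subset_sdiff hss.subset le_rfl)) hct)
      exact le_trans h2 (Nat.add_le_add_right
        (Finset.card_le_card (Finset.inter_subset_inter hss.subset le_rfl)) c)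

lemma treedepth_le_of_conn (G : SimpleGraph V) (A : Finset V) (c : ℕ) (s : Finset V)
    (hH : ∀ t ⊆ s \ A, ConnOn G t → treedepth G t ≤ c) :
    treedepth G s ≤ (s ∩ A).card + c :=
  tdAux_le_of_conn G A c s.card s le_rfl hH

lemma exists_adj_of_connOn {G : SimpleGraph V} {t : Finset V} (h : ConnOn G t)
    (h2 : 2 ≤ t.card) {u : V} (hu : u ∈ t) : ∃ w ∈ t, G.Adj u w := by
  obtain ⟨v, hv, hvu⟩ := Finset.exists_mem_ne (show 1 < t.card by omega) u
  obtain ⟨p⟩ := h.2 u hu v hv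
  cases p with
  | nil => exact absurd rfl hvu.symm
  | cons ha q => exact ⟨_, ha.2.1, ha.2.2⟩

lemma reachable_const {G' : SimpleGraph V} {β : Type} {f : V → β}
    (h : ∀ a b : V, G'.Adj a b → f a = f b) {u v : V} (hr : G'.Reachable u v) :
    f u = f v := by
  obtain ⟨p⟩ := hr
  induction p with
  | nil => rfl
  | cons ha q ih => exact (h _ _ ha).trans ih

end TDInfra

section ReductionTD

open Finset

/-- The set of "used" connector vertices `p_{i,j}`, `i < j`. -/
noncomputable def Pset (K N : ℕ) : Finset (HV K N) :=
  (Finset.univ.filter fun q : Fin (K + 2) × Fin (K + 2) => q.1 < q.2).image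
    fun q => HV.p q.1 q.2

lemma mem_Pset {K N : ℕ} {a b : Fin (K + 2)} : HV.p a b ∈ Pset K N ↔ a < b := by
  unfold Pset
  simp only [Finset.mem_image, Finset.mem_filter, Finset.mem_univ, true_and]
  constructor
  · rintro ⟨⟨x, y⟩, hq, heq⟩
    simp only [HV.p.injEq] at heq
    obtain ⟨rfl, rfl⟩ := heq
    exact hq
  · intro h
    exact ⟨(a, b), h, rfl⟩

lemma Pset_card_le (K N : ℕ) : (Pset K N).card ≤ (K + 2) * (K + 1) / 2 := by
  have h1 : (Pset K N).card ≤
      (Finset.univ.filter fun q : Fin (K + 2) × Fin (K + 2) => q.1 < q.2).card :=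
    Finset.card_image_le
  set L := Finset.univ.filter fun q : Fin (K + 2) × Fin (K + 2) => q.1 < q.2 with hL
  set Gt := Finset.univ.filter fun q : Fin (K + 2) × Fin (K + 2) => q.2 < q.1 with hG
  have himg : L.image Prod.swap = Gt := by
    ext ⟨a, b⟩
    simp only [hL, hG, Finset.mem_image, Finset.mem_filter, Finset.mem_univ, true_and]
    constructor
    · rintro ⟨⟨x, y⟩, hxy, heq⟩
      simp only [Prod.swap_prod_mk, Prod.mk.injEq] at heq
      obtain ⟨rfl, rfl⟩ := heq
      exact hxy
    · intro h
      exact ⟨(b, a), h, rfl⟩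
  have hcard : Gt.card = L.card := by
    rw [← himg, Finset.card_image_of_injective _ Prod.swap_injective]
  have hdisj : Disjoint L Gt := by
    rw [Finset.disjoint_left]
    intro q hq hq'
    simp only [hL, hG, Finset.mem_filter] at hq hq'
    exact absurd hq'.2 (lt_asymm hq.2)
  have hDcard : (Finset.univ.image fun i : Fin (K + 2) => (i, i)).card = K + 2 := by
    rw [Finset.card_image_of_injective _ (fun x y h => by
      simpa using congrArg Prod.fst h)]
    simp
  have hsub : L ∪ Gt ⊆ Finset.univ \ (Finset.univ.image fun i : Fin (K + 2) => (i, i)) := by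
    intro q hq
    rw [Finset.mem_sdiff]
    refine ⟨Finset.mem_univ _, fun hd => ?_⟩
    obtain ⟨j, _, hj⟩ := Finset.mem_image.mp hd
    rcases Finset.mem_union.mp hq with h | h <;>
      simp only [hL, hG, Finset.mem_filter] at h <;>
      rw [← hj] at h <;> exact lt_irrefl _ h.2
  have huniv : (Finset.univ : Finset (Fin (K + 2) × Fin (K + 2))).card = (K + 2) * (K + 2) := by
    simp [Finset.card_univ]
  have hcards : L.card + Gt.card ≤ (K + 2) * (K + 2) - (K + 2) := by
    have h := Finset.card_le_card hsub
    rw [Finset.card_union_of_disjoint hdisj] at h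
    rwa [Finset.card_sdiff_of_subset (Finset.subset_univ _), hDcard, huniv] at h
  have hnn : (K + 2) * (K + 2) - (K + 2) = (K + 2) * (K + 1) := by
    rw [show (K + 2) * (K + 2) = (K + 2) * (K + 1) + (K + 2) from by ring, Nat.add_sub_cancel]
  have h2 : L.card * 2 ≤ (K + 2) * (K + 1) := by
    rw [hcard, hnn] at hcards
    omega
  exact le_trans h1 ((Nat.le_div_iff_mul_le (by norm_num)).mpr h2)

/-- The "color" of a vertex. -/
def colOf {K N : ℕ} : HV K N → Fin (K + 2)
  | HV.x i _ _ => i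
  | HV.s i _ => i
  | HV.t i _ => i
  | HV.p i _ => i

/-- The "row" (vertex of the original graph) of a vertex. -/
def rowOf {K N : ℕ} : HV K N → Fin (N + 2)
  | HV.x _ v _ => v
  | HV.s _ v => v
  | HV.t _ v => v
  | HV.p _ _ => 0

/-- Whether a vertex is a connector vertex. -/
def isPv {K N : ℕ} : HV K N → Prop
  | HV.p _ _ => True
  | _ => False

lemma firstIdx_ne {K : ℕ} (i : Fin (K + 2)) : firstIdx K i ≠ i := by
  unfold firstIdx
  split
  · rename_i h
    rw [h]
    exact one_ne_zero
  · rename_i h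
    exact fun hc => h hc.symm

lemma lastIdx_ne {K : ℕ} (i : Fin (K + 2)) : lastIdx K i ≠ i := by
  unfold lastIdx
  split
  · rename_i h
    rw [h]
    intro hc
    have := congrArg Fin.val hc
    simp [Fin.last] at this
  · rename_i h
    exact fun hc => h hc.symm

lemma adj_p {K N : ℕ} {a b : Fin (K + 2)} {w : HV K N}
    (h : (hgraph K N).Adj (HV.p a b) w) : a < b := by
  rw [hgraph, SimpleGraph.fromRel_adj] at h
  rcases h.2 with h | h <;> cases w <;> simp [hrel] at h
  exact h.1

lemma adj_col {K N : ℕ} {u w : HV K N} (h : (hgraph K N).Adj u w)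
    (hu : ¬ isPv u) (hw : ¬ isPv w) : colOf u = colOf w := by
  rw [hgraph, SimpleGraph.fromRel_adj] at h
  obtain ⟨-, h⟩ := h
  rcases h with h | h <;> cases u <;> cases w <;>
    simp_all [hrel, colOf, isPv]

lemma adj_xii {K N : ℕ} {a : Fin (K + 2)} {b : Fin (N + 2)} {w : HV K N}
    (h : (hgraph K N).Adj (HV.x a b a) w) (hw : ¬ isPv w) : False := by
  rw [hgraph, SimpleGraph.fromRel_adj] at h
  obtain ⟨-, h⟩ := h
  rcases h with h | h <;> cases w <;>
    first
      | exact h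
      | exact hw trivial
      | exact h.2.2.1 rfl
      | (obtain ⟨rfl, -, -, hfi⟩ := h
         first
           | exact firstIdx_ne _ hfi.symm
           | exact lastIdx_ne _ hfi.symm)
      | (obtain ⟨rfl, -, -, hne, -⟩ := h
         exact hne rfl)

lemma adj_row {K N : ℕ} {i : Fin (K + 2)} {u w : HV K N} (h : (hgraph K N).Adj u w)
    (hu : ¬ isPv u) (hw : ¬ isPv w)
    (hu1 : u ≠ HV.x i 0 (firstIdx K i)) (hu2 : u ≠ HV.x i 0 (lastIdx K i))
    (hw1 : w ≠ HV.x i 0 (firstIdx K i)) (hw2 : w ≠ HV.x i 0 (lastIdx K i))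
    (hcu : colOf u = i) : rowOf u = rowOf w := by
  rw [hgraph, SimpleGraph.fromRel_adj] at h
  obtain ⟨-, h⟩ := h
  rcases h with h | h <;> cases u <;> cases w <;>
    simp_all [hrel, colOf, rowOf, isPv]

end ReductionTD

/-- **Treedepth of the reduction graph.**
The graph `H` produced by the reduction from a Multicolored Clique instance with
`k = K + 2` colors and `n = N + 2` vertices per color has treedepth at most
`k(k−1)/2 + k + 3`; in particular `td(H) = O(k²)`. -/
theorem reduction_treedepth (K N : ℕ) :
    treedepth (hgraph K N) Finset.univ ≤
      (K + 2) * (K + 1) / 2 + (K + 2) + 3 := by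
  have hyp : ∀ t ⊆ Finset.univ \ Pset K N, ConnOn (hgraph K N) t →
      treedepth (hgraph K N) t ≤ K + 5 := by
    intro t ht hconn
    by_cases hsmall : t.card ≤ 1
    · exact le_trans (treedepth_le_card _ _) (by omega)
    have h2 : 2 ≤ t.card := by omega
    have hnp : ∀ u ∈ t, ¬ isPv u := by
      intro u hu hp
      cases u with
      | p a b =>
        obtain ⟨w, hwmem, hadj⟩ := exists_adj_of_connOn hconn h2 hu
        have hab : HV.p a b ∈ Pset K N := mem_Pset.mpr (adj_p hadj)
        have hm := ht hu
        rw [Finset.mem_sdiff] at hm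
        exact hm.2 hab
      | x i v j => exact hp
      | s i v => exact hp
      | t i v => exact hp
    obtain ⟨u₀, hu₀⟩ := hconn.1
    have hcol : ∀ u ∈ t, colOf u = colOf u₀ := by
      intro u hu
      refine reachable_const (f := colOf) ?_ (hconn.2 u hu u₀ hu₀)
      intro a b hab
      exact adj_col hab.2.2 (hnp a (Finset.mem_coe.mp hab.1))
        (hnp b (Finset.mem_coe.mp hab.2.1))
    set i := colOf u₀ with hi
    set A2 : Finset (HV K N) := {HV.x i 0 (firstIdx K i), HV.x i 0 (lastIdx K i)} with hA2
    have hyp2 : ∀ t' ⊆ t \ A2, ConnOn (hgraph K N) t' →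
        treedepth (hgraph K N) t' ≤ K + 3 := by
      intro t' ht' hconn'
      by_cases hsmall' : t'.card ≤ 1
      · exact le_trans (treedepth_le_card _ _) (by omega)
      have h2' : 2 ≤ t'.card := by omega
      have hsub' : ∀ u ∈ t', u ∈ t ∧ u ∉ A2 := by
        intro u hu
        have hm := ht' hu
        rw [Finset.mem_sdiff] at hm
        exact hm
      obtain ⟨u₁, hu₁⟩ := hconn'.1
      have hrow : ∀ u ∈ t', rowOf u = rowOf u₁ := by
        intro u hu
        refine reachable_const (f := rowOf) ?_ (hconn'.2 u hu u₁ hu₁)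
        intro a b hab
        have ha := hsub' a (Finset.mem_coe.mp hab.1)
        have hb := hsub' b (Finset.mem_coe.mp hab.2.1)
        have hA2a : a ≠ HV.x i 0 (firstIdx K i) ∧ a ≠ HV.x i 0 (lastIdx K i) := by
          constructor <;> intro hc <;> apply ha.2 <;> rw [hc] <;> simp [hA2]
        have hA2b : b ≠ HV.x i 0 (firstIdx K i) ∧ b ≠ HV.x i 0 (lastIdx K i) := by
          constructor <;> intro hc <;> apply hb.2 <;> rw [hc] <;> simp [hA2]
        exact adj_row hab.2.2 (hnp a ha.1) (hnp b hb.1)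
          hA2a.1 hA2a.2 hA2b.1 hA2b.2 (hcol a ha.1)
      set v := rowOf u₁ with hv
      have hnxii : ∀ u ∈ t', ∀ (a : Fin (K + 2)) (b : Fin (N + 2)), u ≠ HV.x a b a := by
        intro u hu a b heq
        subst heq
        obtain ⟨w, hwmem, hadj⟩ := exists_adj_of_connOn hconn' h2' hu
        exact adj_xii hadj (hnp w (hsub' w hwmem).1)
      set S : Finset (HV K N) := insert (HV.s i v) (insert (HV.t i v)
        ((Finset.univ.filter fun j : Fin (K + 2) => j ≠ i).image fun j => HV.x i v j))
        with hS
      have hsubS : t' ⊆ S := by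
        intro u hu
        have hcu : colOf u = i := hcol u (hsub' u hu).1
        have hru : rowOf u = v := hrow u hu
        have hnu := hnp u (hsub' u hu).1
        rw [hS]
        cases u with
        | p a b => exact absurd trivial hnu
        | s a b =>
          simp only [colOf] at hcu
          simp only [rowOf] at hru
          subst hcu
          subst hru
          exact Finset.mem_insert_self _ _
        | t a b =>
          simp only [colOf] at hcu
          simp only [rowOf] at hru
          subst hcu
          subst hru
          exact Finset.mem_insert.mpr (Or.inr (Finset.mem_insert_self _ _))
        | x a b c =>
          simp only [colOf] at hcu
          simp only [rowOf] at hru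
          subst hcu
          subst hru
          have hne : c ≠ i := fun hc => hnxii _ hu i v (by rw [hc])
          refine Finset.mem_insert.mpr (Or.inr (Finset.mem_insert.mpr (Or.inr ?_)))
          exact Finset.mem_image.mpr ⟨c, Finset.mem_filter.mpr ⟨Finset.mem_univ _, hne⟩, rfl⟩
      have hScard : S.card ≤ K + 3 := by
        rw [hS]
        have h1 : ((Finset.univ.filter fun j : Fin (K + 2) => j ≠ i).image
            fun j => HV.x i v j).card ≤ K + 1 := by
          refine le_trans Finset.card_image_le ?_
          have heq : (Finset.univ.filter fun j : Fin (K + 2) => j ≠ i)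
              = Finset.univ.erase i := by
            ext a
            simp [Finset.mem_erase, and_comm]
          rw [heq, Finset.card_erase_of_mem (Finset.mem_univ _)]
          simp
        have h3 := Finset.card_insert_le (HV.s i v) (insert (HV.t i v)
          ((Finset.univ.filter fun j : Fin (K + 2) => j ≠ i).image fun j => HV.x i v j))
        have h4 := Finset.card_insert_le (HV.t i v)
          ((Finset.univ.filter fun j : Fin (K + 2) => j ≠ i).image fun j => HV.x i v j)
        omega
      exact le_trans (treedepth_le_card _ _)
        (le_trans (Finset.card_le_card hsubS) hScard)
    have key2 := treedepth_le_of_conn (hgraph K N) A2 (K + 3) t hyp2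
    have hA2card : (t ∩ A2).card ≤ 2 := by
      refine le_trans (Finset.card_le_card Finset.inter_subset_right) ?_
      rw [hA2]
      exact le_trans (Finset.card_insert_le _ _) (by simp)
    omega
  have key := treedepth_le_of_conn (hgraph K N) (Pset K N) (K + 5) Finset.univ hyp
  rw [Finset.univ_inter] at key
  have hP := Pset_card_le K N
  omega


end Paper
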